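/- Let 𝒜 be a countable contracted set of disjoint α-paths in S² (each with a chosen extension), and let Φ be a regluing of 𝒜 into some set ℬ of disjoint β-paths. Then ℬ is automatically contracted. -/

import Mathlib

open Set Filter Topology OnePoint

noncomputable section

abbrev Sph : Type := Metric.sphere (0 : EuclideanSpace ℝ (Fin 3)) 1

/-- The unit circle in the plane. -/
def circS : Set (ℝ × ℝ) := {p | p.1 ^ 2 + p.2 ^ 2 = 1}

abbrev OP : Type := OnePoint (ℝ × ℝ)

/-- The closed outside `Δ̄∞` of the unit circle in the one-point compactification of the plane. -/
def deltaBar : Set OP := insert ∞ ((fun p : ℝ × ℝ => (p : OP)) '' {p | 1 ≤ p.1 ^ 2 + p.2 ^ 2})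

/-- The unit circle viewed inside the one-point compactification of the plane. -/
def circOP : Set OP := (fun p : ℝ × ℝ => (p : OP)) '' circS

/-- The open outside `Δ∞` of the unit circle. -/
def deltaInf : Set OP := deltaBar \ circOP

/-- An α-path: `α (t₁,t₂) = α (t₁',t₂')` iff `t₁ = t₁'` and `t₂ = ±t₂'`. -/
def IsAlphaPath (α : ℝ × ℝ → Sph) : Prop :=
  ContinuousOn α circS ∧
    ∀ p ∈ circS, ∀ q ∈ circS, (α p = α q ↔ p.1 = q.1 ∧ (p.2 = q.2 ∨ p.2 = -q.2))

/-- A β-path: `β (t₁,t₂) = β (t₁',t₂')` iff `t₁ = ±t₁'` and `t₂ = t₂'`. -/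
def IsBetaPath (β : ℝ × ℝ → Sph) : Prop :=
  ContinuousOn β circS ∧
    ∀ p ∈ circS, ∀ q ∈ circS, (β p = β q ↔ (p.1 = q.1 ∨ p.1 = -q.1) ∧ p.2 = q.2)

/-- The image of a path (its values on the unit circle). -/
def pathIm (α : ℝ × ℝ → Sph) : Set Sph := α '' circS

/-- `Im 𝒜`: the union of the images of the members of a family of paths. -/
def famIm (A : Set (ℝ × ℝ → Sph)) : Set Sph := ⋃ α ∈ A, pathIm α

/-- A family of paths with pairwise disjoint images. -/
def DisjointPaths (A : Set (ℝ × ℝ → Sph)) : Prop :=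
  A.Pairwise fun α α' => Disjoint (pathIm α) (pathIm α')

/-- `ext` is an extension `α̂ : Δ̄∞ → S²` of the α-path `α`: it is continuous on `Δ̄∞`,
restricts to `α` on the unit circle, and maps `Δ∞` homeomorphically onto `S² ∖ α(S¹)`. -/
def IsExtension (α : ℝ × ℝ → Sph) (ext : OP → Sph) : Prop :=
  ContinuousOn ext deltaBar ∧ (∀ p ∈ circS, ext (p : OP) = α p) ∧
    Topology.IsEmbedding (deltaInf.restrict ext) ∧ ext '' deltaInf = (pathIm α)ᶜ

/-- `Φ` is a regluing of the family `A` of α-paths (with chosen extensions `ext`) into the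
family `B` of β-paths, according to the correspondence `b : α ↦ β_α`.  Only the values of `Φ`
on `S² ∖ Im A` matter: `Φ` restricts to a continuous bijection `S² ∖ Im A → S² ∖ Im B`, and
for every `α ∈ A` and `p ∈ S¹`, `Φ (α̂ z)` tends to `β_α p` as `z` tends to `p` within `Δ∞`
(along the points where `Φ` is defined, i.e. where `α̂ z ∉ Im A`). -/
structure IsRegluing (A : Set (ℝ × ℝ → Sph)) (ext : (ℝ × ℝ → Sph) → OP → Sph)
    (B : Set (ℝ × ℝ → Sph)) (b : (ℝ × ℝ → Sph) → ℝ × ℝ → Sph) (Φ : Sph → Sph) : Prop where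
  bijOn : Set.BijOn Φ (famIm A)ᶜ (famIm B)ᶜ
  contOn : ContinuousOn Φ (famIm A)ᶜ
  tendsto : ∀ α ∈ A, ∀ p ∈ circS,
    Filter.Tendsto (fun z => Φ (ext α z))
      (𝓝[deltaInf ∩ ext α ⁻¹' (famIm A)ᶜ] ((p : ℝ × ℝ) : OP)) (𝓝 (b α p))

/-- The data of a set `A` of disjoint α-paths with chosen extensions `ext`, a set `B` of
disjoint β-paths, and a bijection `b : α ↦ β_α` from `A` to `B`. -/
structure RegluingData (A : Set (ℝ × ℝ → Sph)) (ext : (ℝ × ℝ → Sph) → OP → Sph)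
    (B : Set (ℝ × ℝ → Sph)) (b : (ℝ × ℝ → Sph) → ℝ × ℝ → Sph) : Prop where
  alpha : ∀ α ∈ A, IsAlphaPath α
  disjA : DisjointPaths A
  extOk : ∀ α ∈ A, IsExtension α (ext α)
  beta : ∀ β ∈ B, IsBetaPath β
  disjB : DisjointPaths B
  bij : Set.BijOn b A B

/-- A family of subsets of a metric space is contracted if for every `ε > 0` only finitely many
members have diameter exceeding `ε`. -/
def Contracted {X : Type*} [PseudoMetricSpace X] (S : Set (Set X)) : Prop :=
  ∀ ε > 0, {s ∈ S | ε < Metric.diam s}.Finite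


section AuxLemmas

lemma one_zero_mem_circS : ((1:ℝ), (0:ℝ)) ∈ circS := by simp [circS]

lemma circS_isCompact : IsCompact circS := by
  have hclosed : IsClosed circS := by
    have : circS = (fun p : ℝ × ℝ => p.1 ^ 2 + p.2 ^ 2) ⁻¹' {1} := rfl
    rw [this]
    exact isClosed_singleton.preimage (by fun_prop)
  have hbdd : Bornology.IsBounded circS := by
    rw [Metric.isBounded_iff_subset_closedBall 0]
    refine ⟨2, ?_⟩
    rintro p hp
    rw [Metric.mem_closedBall, dist_zero_right]
    have h1 : p.1 ^ 2 ≤ 1 := by have := sq_nonneg p.2; simp [circS] at hp; nlinarith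
    have h2 : p.2 ^ 2 ≤ 1 := by have := sq_nonneg p.1; simp [circS] at hp; nlinarith
    have h1' : |p.1| ≤ 1 := by nlinarith [abs_nonneg p.1, sq_abs p.1]
    have h2' : |p.2| ≤ 1 := by nlinarith [abs_nonneg p.2, sq_abs p.2]
    have : ‖p‖ = max ‖p.1‖ ‖p.2‖ := rfl
    rw [this]
    simp only [Real.norm_eq_abs]
    exact le_trans (max_le h1' h2') one_le_two
  exact Metric.isCompact_of_isClosed_isBounded hclosed hbdd

lemma upper_semicircle_mem {t : ℝ} (ht : t ∈ Icc (-1:ℝ) 1) :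
    (t, Real.sqrt (1 - t ^ 2)) ∈ circS := by
  have h1 : (0:ℝ) ≤ 1 - t ^ 2 := by
    obtain ⟨h, h'⟩ := ht; nlinarith
  simp only [circS, mem_setOf_eq]
  rw [Real.sq_sqrt h1]; ring

lemma lower_semicircle_mem {t : ℝ} (ht : t ∈ Icc (-1:ℝ) 1) :
    (t, -Real.sqrt (1 - t ^ 2)) ∈ circS := by
  have h1 : (0:ℝ) ≤ 1 - t ^ 2 := by obtain ⟨h, h'⟩ := ht; nlinarith
  simp only [circS, mem_setOf_eq]
  rw [neg_pow, Real.sq_sqrt h1]; ring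

lemma circS_fst_mem {p : ℝ × ℝ} (hp : p ∈ circS) : p.1 ∈ Icc (-1:ℝ) 1 := by
  simp only [circS, mem_setOf_eq] at hp
  constructor <;> nlinarith [sq_nonneg p.2]

lemma circS_isPreconnected : IsPreconnected circS := by
  have hu : IsPreconnected ((fun t : ℝ => (t, Real.sqrt (1 - t ^ 2))) '' Icc (-1) 1) := by
    apply (isPreconnected_Icc).image
    fun_prop
  have hl : IsPreconnected ((fun t : ℝ => (t, -Real.sqrt (1 - t ^ 2))) '' Icc (-1) 1) := by
    apply (isPreconnected_Icc).image
    fun_prop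
  have hcup : circS = (fun t : ℝ => (t, Real.sqrt (1 - t ^ 2))) '' Icc (-1) 1 ∪
      (fun t : ℝ => (t, -Real.sqrt (1 - t ^ 2))) '' Icc (-1) 1 := by
    apply Subset.antisymm
    · rintro ⟨t1, t2⟩ hp
      have ht1 : t1 ∈ Icc (-1:ℝ) 1 := circS_fst_mem hp
      have h2 : Real.sqrt (1 - t1 ^ 2) = |t2| := by
        have : 1 - t1 ^ 2 = t2 ^ 2 := by simp only [circS, mem_setOf_eq] at hp; linarith
        rw [this, Real.sqrt_sq_eq_abs]
      rcases abs_cases t2 with ⟨h, _⟩ | ⟨h, _⟩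
      · left; exact ⟨t1, ht1, by simp only; rw [h2, h]⟩
      · right; exact ⟨t1, ht1, by simp only; rw [h2, h]; simp⟩
    · rintro x (⟨t, ht, rfl⟩ | ⟨t, ht, rfl⟩)
      · exact upper_semicircle_mem ht
      · exact lower_semicircle_mem ht
  rw [hcup]
  apply IsPreconnected.union ((1:ℝ), (0:ℝ)) _ _ hu hl
  · exact ⟨1, ⟨by norm_num, le_refl 1⟩, by norm_num⟩
  · exact ⟨1, ⟨by norm_num, le_refl 1⟩, by norm_num⟩

lemma pathIm_nonempty (α : ℝ × ℝ → Sph) : (pathIm α).Nonempty :=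
  ⟨α (1, 0), mem_image_of_mem _ one_zero_mem_circS⟩

lemma pathIm_isCompact {α : ℝ × ℝ → Sph} (h : ContinuousOn α circS) : IsCompact (pathIm α) :=
  circS_isCompact.image_of_continuousOn h

lemma pathIm_isPreconnected {α : ℝ × ℝ → Sph} (h : ContinuousOn α circS) :
    IsPreconnected (pathIm α) :=
  circS_isPreconnected.image _ h

/-- The arc parametrization of an α-path. -/
def arcF (α : ℝ × ℝ → Sph) : ℝ → Sph := fun t => α (t, Real.sqrt (1 - t ^ 2))

lemma arcF_continuousOn {α : ℝ × ℝ → Sph} (h : IsAlphaPath α) :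
    ContinuousOn (arcF α) (Icc (-1) 1) := by
  apply h.1.comp (by fun_prop : Continuous
    (fun t : ℝ => (t, Real.sqrt (1 - t ^ 2)))).continuousOn
  intro t ht
  exact upper_semicircle_mem ht

lemma arcF_injOn {α : ℝ × ℝ → Sph} (h : IsAlphaPath α) :
    InjOn (arcF α) (Icc (-1) 1) := by
  intro s hs t ht hst
  have := (h.2 _ (upper_semicircle_mem hs) _ (upper_semicircle_mem ht)).1 hst
  exact this.1

lemma pathIm_eq_arcF_image {α : ℝ × ℝ → Sph} (h : IsAlphaPath α) :
    pathIm α = arcF α '' Icc (-1) 1 := by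
  apply Subset.antisymm
  · rintro x ⟨p, hp, rfl⟩
    refine ⟨p.1, circS_fst_mem hp, ?_⟩
    have hmem : (p.1, Real.sqrt (1 - p.1 ^ 2)) ∈ circS := upper_semicircle_mem (circS_fst_mem hp)
    have h2 : Real.sqrt (1 - p.1 ^ 2) = |p.2| := by
      have : 1 - p.1 ^ 2 = p.2 ^ 2 := by simp only [circS, mem_setOf_eq] at hp; linarith
      rw [this, Real.sqrt_sq_eq_abs]
    show arcF α p.1 = α p
    apply ((h.2 _ hmem _ hp).2 _)
    refine ⟨rfl, ?_⟩
    simp only [h2]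
    rcases abs_cases p.2 with ⟨h', _⟩ | ⟨h', _⟩
    · left; exact h'
    · right; exact h'
  · rintro x ⟨t, ht, rfl⟩
    exact ⟨_, upper_semicircle_mem ht, rfl⟩

/-- Continuity of the inverse of an injective continuous map on a compact set. -/
lemma continuousOn_invFunOn_image {X Y : Type*} [TopologicalSpace X] [TopologicalSpace Y]
    [T2Space Y] [Nonempty X] {f : X → Y} {K : Set X} (hK : IsCompact K) (hf : ContinuousOn f K)
    (hinj : InjOn f K) : ContinuousOn (Function.invFunOn f K) (f '' K) := by
  haveI : CompactSpace ↥K := isCompact_iff_compactSpace.mp hK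
  have hFc : Continuous (K.restrict f) := continuousOn_iff_continuous_restrict.mp hf
  -- the bijection from K to the image
  have hbij : Function.Bijective (fun k : ↥K => (⟨f k, mem_image_of_mem f k.2⟩ : ↥(f '' K))) := by
    constructor
    · rintro ⟨a, ha⟩ ⟨b, hb⟩ hab
      simp only [Subtype.mk_eq_mk] at hab ⊢
      exact hinj ha hb hab
    · rintro ⟨y, p, hp, rfl⟩
      exact ⟨⟨p, hp⟩, rfl⟩
  let e : ↥K ≃ ↥(f '' K) := Equiv.ofBijective _ hbij
  have hce : Continuous e := by
    apply Continuous.subtype_mk hFc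
  let H := Continuous.homeoOfEquivCompactToT2 (f := e) hce
  rw [continuousOn_iff_continuous_restrict]
  have : (f '' K).restrict (Function.invFunOn f K) = Subtype.val ∘ H.symm := by
    funext y
    simp only [restrict_apply, Function.comp_apply]
    have h1 : f (Function.invFunOn f K y.1) = y.1 := by
      obtain ⟨p, hp, hfp⟩ := y.2
      exact Function.invFunOn_eq ⟨p, hp, hfp⟩
    have h2 : Function.invFunOn f K y.1 ∈ K := by
      obtain ⟨p, hp, hfp⟩ := y.2
      exact Function.invFunOn_mem ⟨p, hp, hfp⟩
    -- H.symm y is the unique k with f k = y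
    have h3 : H (H.symm y) = y := H.apply_symm_apply y
    have h4 : f (H.symm y).1 = y.1 := congrArg Subtype.val h3
    have := hinj h2 (H.symm y).2 (h1.trans h4.symm)
    exact this
  change Continuous ((f '' K).restrict (Function.invFunOn f K))
  rw [this]
  exact continuous_subtype_val.comp H.symm.continuous

lemma rank_E2 : 1 < Module.rank ℝ (EuclideanSpace ℝ (Fin 2)) := by
  rw [← Module.finrank_eq_rank ℝ]
  norm_cast
  rw [finrank_euclideanSpace_fin]
  norm_num

/-- Key topological fact: the image of an α-path has empty interior in the sphere. -/
lemma isAlphaPath_interior_empty {α : ℝ × ℝ → Sph} (h : IsAlphaPath α) :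
    interior (pathIm α) = ∅ := by
  by_contra hne
  obtain ⟨w, hw⟩ : (interior (pathIm α)).Nonempty := nonempty_iff_ne_empty.2 hne
  haveI : Fact (Module.finrank ℝ (EuclideanSpace ℝ (Fin 3)) = 2 + 1) :=
    ⟨by simp [finrank_euclideanSpace_fin]⟩
  -- the antipode of w
  let v : Sph := ⟨-(w : EuclideanSpace ℝ (Fin 3)), by
    rw [mem_sphere_zero_iff_norm, norm_neg]
    exact mem_sphere_zero_iff_norm.mp w.2⟩
  have hvw : w ≠ v := by
    intro hcontra
    have h1 : (w : EuclideanSpace ℝ (Fin 3)) = -(w : EuclideanSpace ℝ (Fin 3)) :=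
      congrArg Subtype.val hcontra
    have h2 : ‖(w : EuclideanSpace ℝ (Fin 3))‖ = 1 := mem_sphere_zero_iff_norm.mp w.2
    have hsum : (w : EuclideanSpace ℝ (Fin 3)) + w = 0 := by
      nth_rewrite 1 [h1]; simp
    have h2s : (2:ℝ) • (w : EuclideanSpace ℝ (Fin 3)) = 0 := by rw [two_smul]; exact hsum
    rcases smul_eq_zero.mp h2s with h0 | h0
    · norm_num at h0
    · rw [h0] at h2; simp at h2
  let φ := stereographic' 2 v
  have hsource : φ.source = {v}ᶜ := stereographic'_source v
  have htarget : φ.target = univ := stereographic'_target v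
  -- the open set Ω
  set Ω : Set Sph := interior (pathIm α) ∩ {v}ᶜ with hΩdef
  have hΩopen : IsOpen Ω := isOpen_interior.inter (isOpen_compl_singleton)
  have hwΩ : w ∈ Ω := ⟨hw, hvw⟩
  have hΩsub : Ω ⊆ φ.source := by rw [hsource]; exact inter_subset_right
  set W' : Set (EuclideanSpace ℝ (Fin 2)) := φ '' Ω with hW'def
  have hW'open : IsOpen W' := φ.isOpen_image_of_subset_source hΩopen hΩsub
  have hy0 : φ w ∈ W' := mem_image_of_mem _ hwΩ
  obtain ⟨r', hr'pos, hball⟩ := Metric.isOpen_iff.mp hW'open _ hy0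
  set y0 := φ w
  set S : Set (EuclideanSpace ℝ (Fin 2)) := Metric.closedBall y0 (r'/2) with hSdef
  have hSW : S ⊆ W' := fun z hz => hball (Metric.mem_ball.mpr
    (lt_of_le_of_lt (Metric.mem_closedBall.mp hz) (by linarith)))
  -- φ.symm is continuous and inverts φ on W'
  have hψcont : Continuous φ.symm := by
    have h1 := φ.continuousOn_symm
    rw [htarget] at h1
    exact continuousOn_univ.mp h1
  have hψ : ∀ y ∈ W', φ.symm y ∈ Ω ∧ φ (φ.symm y) = y := by
    rintro y ⟨ω, hω, rfl⟩
    rw [φ.left_inv (hΩsub hω)]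
    exact ⟨hω, rfl⟩
  have hψinj : InjOn φ.symm W' := by
    intro y hy y' hy' hyy'
    rw [← (hψ y hy).2, ← (hψ y' hy').2, hyy']
  -- the inverse of the arc parametrization
  set K : Set ℝ := Icc (-1) 1 with hKdef
  set g : Sph → ℝ := Function.invFunOn (arcF α) K with hgdef
  have hgcont : ContinuousOn g (arcF α '' K) :=
    continuousOn_invFunOn_image isCompact_Icc (arcF_continuousOn h) (arcF_injOn h)
  have hginj : InjOn g (arcF α '' K) := by
    intro x hx x' hx' hxx'
    have h1 : arcF α (g x) = x := Function.invFunOn_eq (by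
      obtain ⟨t, ht, rfl⟩ := hx; exact ⟨t, ht, rfl⟩)
    have h2 : arcF α (g x') = x' := Function.invFunOn_eq (by
      obtain ⟨t, ht, rfl⟩ := hx'; exact ⟨t, ht, rfl⟩)
    rw [← h1, ← h2, hxx']
  have hpath_eq : pathIm α = arcF α '' K := pathIm_eq_arcF_image h
  -- the composed injective continuous map e : S → ℝ
  set e : EuclideanSpace ℝ (Fin 2) → ℝ := fun y => g (φ.symm y) with hedef
  have hmapsto : MapsTo φ.symm S (arcF α '' K) := by
    intro y hy
    have := (hψ y (hSW hy)).1
    rw [← hpath_eq]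
    exact interior_subset this.1
  have hecont : ContinuousOn e S :=
    hgcont.comp (hψcont.continuousOn) hmapsto
  have heinj : InjOn e S := by
    intro y hy y' hy' hyy'
    exact hψinj (hSW hy) (hSW hy')
      (hginj (hmapsto hy) (hmapsto hy') hyy')
  -- two circles and two radial segments
  set ρ1 : ℝ := r'/8 with hρ1
  set ρ2 : ℝ := r'/4 with hρ2
  have hρ1pos : 0 < ρ1 := by positivity
  have hρ12 : ρ1 < ρ2 := by rw [hρ1, hρ2]; linarith
  have hρ2lt : ρ2 ≤ r'/2 := by rw [hρ2]; linarith
  set Sig1 : Set (EuclideanSpace ℝ (Fin 2)) := Metric.sphere y0 ρ1 with hSig1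
  set Sig2 : Set (EuclideanSpace ℝ (Fin 2)) := Metric.sphere y0 ρ2 with hSig2
  have hSig1S : Sig1 ⊆ S := fun z hz => by
    simp only [hSig1, Metric.mem_sphere] at hz
    simp only [hSdef, Metric.mem_closedBall, hz]
    linarith
  have hSig2S : Sig2 ⊆ S := fun z hz => by
    simp only [hSig2, Metric.mem_sphere] at hz
    simp only [hSdef, Metric.mem_closedBall, hz]
    linarith
  set u1 : EuclideanSpace ℝ (Fin 2) := EuclideanSpace.single (0 : Fin 2) (1:ℝ) with hu1
  have hu1norm : ‖u1‖ = 1 := by simp [hu1, EuclideanSpace.norm_single]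
  have hmem_sphere : ∀ (ρ : ℝ) (u : EuclideanSpace ℝ (Fin 2)), ‖u‖ = 1 → 0 ≤ ρ →
      y0 + ρ • u ∈ Metric.sphere y0 ρ := by
    intro ρ u hu hρ
    simp only [Metric.mem_sphere, dist_eq_norm]
    rw [add_sub_cancel_left, norm_smul, hu, Real.norm_eq_abs, abs_of_nonneg hρ, mul_one]
  -- the two radial segments, in directions u1 and -u1
  set q1 : EuclideanSpace ℝ (Fin 2) := y0 + ρ1 • u1 with hq1
  set q2 : EuclideanSpace ℝ (Fin 2) := y0 + ρ2 • u1 with hq2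
  set q1' : EuclideanSpace ℝ (Fin 2) := y0 + ρ1 • (-u1) with hq1'
  set q2' : EuclideanSpace ℝ (Fin 2) := y0 + ρ2 • (-u1) with hq2'
  have hq1S2 : q1 ∈ Sig1 := hmem_sphere _ _ hu1norm hρ1pos.le
  have hq2S2 : q2 ∈ Sig2 := hmem_sphere _ _ hu1norm (by linarith)
  have hq1pS2 : q1' ∈ Sig1 := hmem_sphere _ _ (by rw [norm_neg]; exact hu1norm) hρ1pos.le
  have hq2pS2 : q2' ∈ Sig2 := hmem_sphere _ _ (by rw [norm_neg]; exact hu1norm) (by linarith)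
  set L : Set (EuclideanSpace ℝ (Fin 2)) := segment ℝ q1 q2 with hL
  set L' : Set (EuclideanSpace ℝ (Fin 2)) := segment ℝ q1' q2' with hL'
  have hLS : L ⊆ S := (convex_closedBall y0 (r'/2)).segment_subset (hSig1S hq1S2) (hSig2S hq2S2)
  have hL'S : L' ⊆ S := (convex_closedBall y0 (r'/2)).segment_subset (hSig1S hq1pS2) (hSig2S hq2pS2)
  -- segment description
  have hseg : ∀ z ∈ L, ∃ s : ℝ, ρ1 ≤ s ∧ z = y0 + s • u1 := by
    intro z hz
    rw [hL, segment_eq_image'] at hz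
    obtain ⟨t, ht, rfl⟩ := hz
    refine ⟨ρ1 + t * (ρ2 - ρ1), by nlinarith [ht.1, ht.2], ?_⟩
    rw [hq1, hq2]
    module
  have hseg' : ∀ z ∈ L', ∃ s : ℝ, ρ1 ≤ s ∧ z = y0 - s • u1 := by
    intro z hz
    rw [hL', segment_eq_image'] at hz
    obtain ⟨t, ht, rfl⟩ := hz
    refine ⟨ρ1 + t * (ρ2 - ρ1), by nlinarith [ht.1, ht.2], ?_⟩
    rw [hq1', hq2']
    module
  have hu1ne : u1 ≠ 0 := by
    intro hcontra; rw [hcontra] at hu1norm; simp at hu1norm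
  have hLL' : L ∩ L' = ∅ := by
    rw [eq_empty_iff_forall_notMem]
    rintro z ⟨hz1, hz2⟩
    obtain ⟨s, hs, rfl⟩ := hseg z hz1
    obtain ⟨s', hs', heq⟩ := hseg' _ hz2
    have : (s + s') • u1 = 0 := by
      have h0 : y0 + s • u1 - (y0 - s' • u1) = (s + s') • u1 := by module
      rw [heq] at h0
      simpa using h0.symm
    rcases smul_eq_zero.mp this with h0 | h0
    · have : 0 < s + s' := by linarith
      linarith [h0]
    · exact hu1ne h0
  -- images of the circles
  have hSig1pre : IsPreconnected Sig1 :=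
    (isPathConnected_sphere rank_E2 y0 hρ1pos.le).isConnected.isPreconnected
  have hSig2pre : IsPreconnected Sig2 :=
    (isPathConnected_sphere rank_E2 y0 (by linarith : (0:ℝ) ≤ ρ2)).isConnected.isPreconnected
  set J1 : Set ℝ := e '' Sig1 with hJ1
  set J2 : Set ℝ := e '' Sig2 with hJ2
  have hJ1pre : IsPreconnected J1 := hSig1pre.image _ (hecont.mono hSig1S)
  have hJ2pre : IsPreconnected J2 := hSig2pre.image _ (hecont.mono hSig2S)
  have hJ1cpt : IsCompact J1 := (isCompact_sphere y0 ρ1).image_of_continuousOn (hecont.mono hSig1S)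
  have hJ2cpt : IsCompact J2 := (isCompact_sphere y0 ρ2).image_of_continuousOn (hecont.mono hSig2S)
  have hJ1ne : J1.Nonempty := ⟨e q1, mem_image_of_mem _ hq1S2⟩
  have hJ2ne : J2.Nonempty := ⟨e q2, mem_image_of_mem _ hq2S2⟩
  have hJdisj : J1 ∩ J2 = ∅ := by
    rw [eq_empty_iff_forall_notMem]
    rintro x ⟨⟨sig1, hs1, rfl⟩, ⟨sig2, hs2, hx2⟩⟩
    have := heinj (hSig2S hs2) (hSig1S hs1) hx2
    rw [this] at hs2
    simp only [hSig1, hSig2, Metric.mem_sphere] at hs1 hs2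
    rw [hs1] at hs2
    rw [hρ1, hρ2] at hs2
    linarith
  -- intervals
  set A1 : ℝ := sInf J1 with hA1
  set B1 : ℝ := sSup J1 with hB1
  set A2 : ℝ := sInf J2 with hA2
  set B2 : ℝ := sSup J2 with hB2
  have hA1m : A1 ∈ J1 := hJ1cpt.sInf_mem hJ1ne
  have hB1m : B1 ∈ J1 := hJ1cpt.sSup_mem hJ1ne
  have hA2m : A2 ∈ J2 := hJ2cpt.sInf_mem hJ2ne
  have hB2m : B2 ∈ J2 := hJ2cpt.sSup_mem hJ2ne
  have hJ1sub : J1 ⊆ Icc A1 B1 := fun x hx =>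
    ⟨csInf_le hJ1cpt.bddBelow hx, le_csSup hJ1cpt.bddAbove hx⟩
  have hJ2sub : J2 ⊆ Icc A2 B2 := fun x hx =>
    ⟨csInf_le hJ2cpt.bddBelow hx, le_csSup hJ2cpt.bddAbove hx⟩
  have hIcc1 : Icc A1 B1 ⊆ J1 := hJ1pre.ordConnected.out hA1m hB1m
  have hIcc2 : Icc A2 B2 ⊆ J2 := hJ2pre.ordConnected.out hA2m hB2m
  -- the two intervals are strictly ordered
  have horder : B1 < A2 ∨ B2 < A1 := by
    by_contra hcontra
    push_neg at hcontra
    obtain ⟨h1, h2⟩ := hcontra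
    have hm1 : max A1 A2 ∈ Icc A1 B1 := ⟨le_max_left _ _, max_le (hJ1sub hA1m).2 h1⟩
    have hm2 : max A1 A2 ∈ Icc A2 B2 := ⟨le_max_right _ _, max_le h2 (hJ2sub hA2m).2⟩
    have : max A1 A2 ∈ J1 ∩ J2 := ⟨hIcc1 hm1, hIcc2 hm2⟩
    rw [hJdisj] at this
    exact this
  -- the images of the segments are ord-connected intervals
  have hLpre : IsPreconnected (e '' L) :=
    ((convex_segment q1 q2).isPreconnected).image _ (hecont.mono hLS)
  have hL'pre : IsPreconnected (e '' L') :=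
    ((convex_segment q1' q2').isPreconnected).image _ (hecont.mono hL'S)
  have heq1L : e q1 ∈ e '' L := mem_image_of_mem _ (left_mem_segment ℝ q1 q2)
  have heq2L : e q2 ∈ e '' L := mem_image_of_mem _ (right_mem_segment ℝ q1 q2)
  have heq1L' : e q1' ∈ e '' L' := mem_image_of_mem _ (left_mem_segment ℝ q1' q2')
  have heq2L' : e q2' ∈ e '' L' := mem_image_of_mem _ (right_mem_segment ℝ q1' q2')
  -- pick the midpoint of the gap, in both segment images
  obtain ⟨ℓ, hℓL, ℓ', hℓL', heℓ⟩ : ∃ ℓ ∈ L, ∃ ℓ' ∈ L', e ℓ = e ℓ' := by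
    rcases horder with hord | hord
    · set m : ℝ := (B1 + A2) / 2 with hm
      have hm1 : e q1 ≤ m := by have := (hJ1sub (mem_image_of_mem _ hq1S2)).2; simp only [hm]; linarith
      have hm2 : m ≤ e q2 := by have := (hJ2sub (mem_image_of_mem _ hq2S2)).1; simp only [hm]; linarith
      have hm1' : e q1' ≤ m := by have := (hJ1sub (mem_image_of_mem _ hq1pS2)).2; simp only [hm]; linarith
      have hm2' : m ≤ e q2' := by have := (hJ2sub (mem_image_of_mem _ hq2pS2)).1; simp only [hm]; linarith
      obtain ⟨ℓ, hℓ, hem⟩ := hLpre.ordConnected.out heq1L heq2L ⟨hm1, hm2⟩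
      obtain ⟨ℓ', hℓ', hem'⟩ := hL'pre.ordConnected.out heq1L' heq2L' ⟨hm1', hm2'⟩
      exact ⟨ℓ, hℓ, ℓ', hℓ', by rw [hem, hem']⟩
    · set m : ℝ := (B2 + A1) / 2 with hm
      have hm1 : m ≤ e q1 := by have := (hJ1sub (mem_image_of_mem _ hq1S2)).1; simp only [hm]; linarith
      have hm2 : e q2 ≤ m := by have := (hJ2sub (mem_image_of_mem _ hq2S2)).2; simp only [hm]; linarith
      have hm1' : m ≤ e q1' := by have := (hJ1sub (mem_image_of_mem _ hq1pS2)).1; simp only [hm]; linarith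
      have hm2' : e q2' ≤ m := by have := (hJ2sub (mem_image_of_mem _ hq2pS2)).2; simp only [hm]; linarith
      obtain ⟨ℓ, hℓ, hem⟩ := hLpre.ordConnected.out heq2L heq1L ⟨hm2, hm1⟩
      obtain ⟨ℓ', hℓ', hem'⟩ := hL'pre.ordConnected.out heq2L' heq1L' ⟨hm2', hm1'⟩
      exact ⟨ℓ, hℓ, ℓ', hℓ', by rw [hem, hem']⟩
  have : ℓ = ℓ' := heinj (hLS hℓL) (hL'S hℓL') heℓ
  rw [eq_empty_iff_forall_notMem] at hLL'
  exact hLL' ℓ ⟨hℓL, this ▸ hℓL'⟩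



lemma infty_mem_deltaBar : (∞ : OP) ∈ deltaBar := mem_insert _ _

lemma coe_mem_deltaBar_iff {q : ℝ × ℝ} : ((q : OP) ∈ deltaBar) ↔ 1 ≤ q.1 ^ 2 + q.2 ^ 2 := by
  simp only [deltaBar, mem_insert_iff, mem_image]
  constructor
  · rintro (h | ⟨p, hp, hpq⟩)
    · exact absurd h (coe_ne_infty q)
    · rwa [← OnePoint.coe_eq_coe.mp hpq]
  · intro h; exact Or.inr ⟨q, h, rfl⟩

lemma coe_mem_circOP_iff {q : ℝ × ℝ} : ((q : OP) ∈ circOP) ↔ q ∈ circS := by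
  simp only [circOP, mem_image]
  constructor
  · rintro ⟨p, hp, hpq⟩; rwa [← OnePoint.coe_eq_coe.mp hpq]
  · intro h; exact ⟨q, h, rfl⟩

lemma infty_mem_deltaInf : (∞ : OP) ∈ deltaInf := by
  refine ⟨infty_mem_deltaBar, ?_⟩
  simp only [circOP, mem_image]
  rintro ⟨p, _, hp⟩
  exact (coe_ne_infty p) hp

lemma coe_mem_deltaInf_iff {q : ℝ × ℝ} : ((q : OP) ∈ deltaInf) ↔ 1 < q.1 ^ 2 + q.2 ^ 2 := by
  simp only [deltaInf, mem_diff, coe_mem_deltaBar_iff, coe_mem_circOP_iff]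
  constructor
  · rintro ⟨h1, h2⟩
    rcases lt_or_eq_of_le h1 with h | h
    · exact h
    · exact absurd h.symm h2
  · intro h
    exact ⟨h.le, by simp only [circS, mem_setOf_eq]; intro hc; rw [hc] at h; exact lt_irrefl _ h⟩

lemma coe_mem_deltaBar_of_circS {q : ℝ × ℝ} (hq : q ∈ circS) : ((q : OP)) ∈ deltaBar :=
  coe_mem_deltaBar_iff.mpr (le_of_eq hq.symm)

lemma deltaBar_compl_eq : deltaBarᶜ = (fun p : ℝ × ℝ => (p : OP)) '' {p | p.1 ^ 2 + p.2 ^ 2 < 1} := by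
  ext x
  induction x using OnePoint.rec with
  | infty =>
    simp only [mem_compl_iff, mem_image]
    constructor
    · intro h; exact absurd infty_mem_deltaBar h
    · rintro ⟨p, _, hp⟩; exact absurd hp (coe_ne_infty p)
  | coe q =>
    simp only [mem_compl_iff, coe_mem_deltaBar_iff, not_le, mem_image]
    constructor
    · intro h; exact ⟨q, h, rfl⟩
    · rintro ⟨p, hp, hpq⟩; rwa [← OnePoint.coe_eq_coe.mp hpq]

lemma deltaBar_isClosed : IsClosed deltaBar := by
  rw [← isOpen_compl_iff, deltaBar_compl_eq]
  rw [OnePoint.isOpen_image_coe]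
  have : {p : ℝ × ℝ | p.1 ^ 2 + p.2 ^ 2 < 1} =
      (fun p : ℝ × ℝ => p.1 ^ 2 + p.2 ^ 2) ⁻¹' (Iio 1) := rfl
  rw [this]
  exact isOpen_Iio.preimage (by fun_prop)

lemma deltaBar_isCompact : IsCompact deltaBar := deltaBar_isClosed.isCompact

lemma deltaInf_subset_deltaBar : deltaInf ⊆ deltaBar := diff_subset
/-- The complement of `famIm A` is dense in the sphere, for `A` a countable family
of α-paths. -/
lemma famIm_compl_dense {A : Set (ℝ × ℝ → Sph)} (hA : A.Countable)
    (halpha : ∀ α ∈ A, IsAlphaPath α) : Dense (famIm A)ᶜ := by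
  haveI := hA.to_subtype
  have hinter : (famIm A)ᶜ = ⋂ (α : ↥A), (pathIm α.1)ᶜ := by
    rw [famIm, compl_iUnion₂]
    ext x
    simp [mem_iInter]
  rw [hinter]
  apply dense_iInter_of_isOpen
  · intro α
    exact (pathIm_isCompact (halpha α.1 α.2).1).isClosed.isOpen_compl
  · intro α
    rw [← interior_eq_empty_iff_dense_compl]
    exact isAlphaPath_interior_empty (halpha α.1 α.2)

/-- The approach filter used in the regluing condition is nontrivial. -/
lemma nhdsWithin_regluing_neBot {A : Set (ℝ × ℝ → Sph)} {ext : (ℝ × ℝ → Sph) → OP → Sph}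
    (hA : A.Countable) (halpha : ∀ α ∈ A, IsAlphaPath α)
    (hext : ∀ α ∈ A, IsExtension α (ext α)) {α : ℝ × ℝ → Sph} (hα : α ∈ A)
    {p : ℝ × ℝ} (hp : p ∈ circS) :
    (𝓝[deltaInf ∩ ext α ⁻¹' (famIm A)ᶜ] ((p : ℝ × ℝ) : OP)).NeBot := by
  rw [← mem_closure_iff_nhdsWithin_neBot]
  rw [mem_closure_iff]
  intro U hUopen hpU
  by_contra hempty
  rw [not_nonempty_iff_eq_empty] at hempty
  -- find a point of U ∩ deltaInf
  have hcont : Continuous (fun t : ℝ => (((((1+t) * p.1, (1+t) * p.2) : ℝ × ℝ)) : OP)) :=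
    OnePoint.continuous_coe.comp (by fun_prop)
  have h0 : (fun t : ℝ => (((((1+t) * p.1, (1+t) * p.2) : ℝ × ℝ)) : OP)) 0 = (p : OP) := by
    norm_num
  have hpre : IsOpen ((fun t : ℝ => (((((1+t) * p.1, (1+t) * p.2) : ℝ × ℝ)) : OP)) ⁻¹' U) :=
    hUopen.preimage hcont
  have h0mem : (0:ℝ) ∈ (fun t : ℝ => (((((1+t) * p.1, (1+t) * p.2) : ℝ × ℝ)) : OP)) ⁻¹' U := by
    simp only [mem_preimage, h0]; exact hpU
  obtain ⟨δ, hδpos, hδ⟩ := Metric.isOpen_iff.mp hpre 0 h0mem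
  set t0 : ℝ := δ/2 with ht0
  have ht0mem : t0 ∈ Metric.ball (0:ℝ) δ := by
    simp only [Metric.mem_ball, Real.dist_eq, ht0]
    rw [sub_zero, abs_of_pos (by linarith)]
    linarith
  set w0 : ℝ × ℝ := ((1+t0) * p.1, (1+t0) * p.2) with hw0
  have hw0U : (w0 : OP) ∈ U := hδ ht0mem
  have hw0inf : (w0 : OP) ∈ deltaInf := by
    rw [coe_mem_deltaInf_iff]
    have hp1 : p.1 ^ 2 + p.2 ^ 2 = 1 := hp
    simp only [hw0]
    have ht0pos : (0:ℝ) < t0 := by rw [ht0]; linarith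
    have hexpand : ((1+t0)*p.1)^2 + ((1+t0)*p.2)^2 = (1+t0)^2 * (p.1^2+p.2^2) := by ring
    rw [hexpand, hp1, mul_one]
    nlinarith
  -- U ∩ deltaInf maps into famIm A
  have hmaps : ∀ z ∈ U ∩ deltaInf, ext α z ∈ famIm A := by
    rintro z ⟨hzU, hzinf⟩
    by_contra hc
    rw [eq_empty_iff_forall_notMem] at hempty
    exact hempty z ⟨hzU, hzinf, hc⟩
  -- the image is a nonempty open subset of the sphere
  obtain ⟨hcontext, hrestr, hemb, him⟩ := hext α hα
  have hrange : range (deltaInf.restrict (ext α)) = (pathIm α)ᶜ := by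
    show range (deltaInf.domRestrict (ext α)) = _
    rw [range_restrict]; exact him
  have hopenemb : IsOpenEmbedding (deltaInf.restrict (ext α)) := by
    rw [isOpenEmbedding_iff]
    refine ⟨hemb, ?_⟩
    rw [hrange]
    exact (pathIm_isCompact (halpha α hα).1).isClosed.isOpen_compl
  set V : Set Sph := ext α '' (U ∩ deltaInf) with hV
  have hVeq : V = (deltaInf.restrict (ext α)) '' (Subtype.val ⁻¹' U) := by
    rw [hV]
    ext x
    simp only [mem_image, restrict_apply, mem_preimage, mem_inter_iff]
    constructor
    · rintro ⟨z, ⟨hz1, hz2⟩, rfl⟩; exact ⟨⟨z, hz2⟩, hz1, rfl⟩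
    · rintro ⟨⟨z, hz2⟩, hz1, rfl⟩; exact ⟨z, ⟨hz1, hz2⟩, rfl⟩
  have hVopen : IsOpen V := by
    rw [hVeq]
    exact hopenemb.isOpenMap _ (hUopen.preimage continuous_subtype_val)
  have hVne : V.Nonempty := ⟨ext α w0, mem_image_of_mem _ ⟨hw0U, hw0inf⟩⟩
  obtain ⟨x, hxV, hxc⟩ := (famIm_compl_dense hA halpha).inter_open_nonempty V hVopen hVne
  obtain ⟨z, hz, rfl⟩ := hxV
  exact hxc (hmaps z hz)

/-- Near any point `x` of the sphere, the values of `Φ` on `(famIm A)ᶜ` concentrate near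
(at most) two points `u`, `v`. -/
lemma local_pair {A B : Set (ℝ × ℝ → Sph)} {ext : (ℝ × ℝ → Sph) → OP → Sph}
    {b : (ℝ × ℝ → Sph) → ℝ × ℝ → Sph} {Φ : Sph → Sph}
    (hdata : RegluingData A ext B b) (hreg : IsRegluing A ext B b Φ) (x : Sph) :
    ∃ u v : Sph, ∀ c > 0, ∃ r > 0, ∀ y : Sph, y ∈ (famIm A)ᶜ → dist y x < r →
      Φ y ∈ Metric.ball u c ∪ Metric.ball v c := by
  by_cases hx : x ∈ famIm A
  · -- x lies on some α-path
    rw [famIm, mem_iUnion₂] at hx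
    obtain ⟨α', hα', hxα⟩ := hx
    obtain ⟨p0, hp0, hp0x⟩ := hxα
    refine ⟨b α' p0, b α' (p0.1, -p0.2), ?_⟩
    by_contra hcontra
    push_neg at hcontra
    obtain ⟨c, hcpos, hc⟩ := hcontra
    set u := b α' p0
    set v := b α' (p0.1, -p0.2)
    -- a sequence of bad points
    have hseq : ∀ k : ℕ, ∃ y : Sph, y ∈ (famIm A)ᶜ ∧ dist y x < 1/(k+1) ∧
        Φ y ∉ Metric.ball u c ∪ Metric.ball v c := by
      intro k
      obtain ⟨y, hy1, hy2, hy3⟩ := hc (1/(k+1)) (by positivity)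
      exact ⟨y, hy1, hy2, hy3⟩
    choose y hy1 hy2 hy3 using hseq
    -- lift to deltaInf
    obtain ⟨hcontext, hrestr, hemb, him⟩ := hdata.extOk α' hα'
    have hyin : ∀ k, y k ∈ ext α' '' deltaInf := by
      intro k
      rw [him]
      intro hmem
      exact hy1 k (mem_biUnion hα' hmem)
    choose z hz1 hz2 using hyin
    -- an ultrafilter refining atTop
    set 𝒱 : Ultrafilter ℕ := Ultrafilter.of atTop with h𝒱def
    have h𝒱le : (𝒱 : Filter ℕ) ≤ atTop := Ultrafilter.of_le atTop
    set G : Ultrafilter OP := 𝒱.map z with hGdef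
    have hGprin : (G : Filter OP) ≤ 𝓟 deltaBar := by
      rw [le_principal_iff, hGdef, Ultrafilter.coe_map]
      exact Filter.mem_map.mpr (Filter.univ_mem' (fun k => deltaInf_subset_deltaBar (hz1 k)))
    obtain ⟨zstar, hzstar, hGle⟩ := deltaBar_isCompact.ultrafilter_le_nhds G hGprin
    -- y tends to x along the ultrafilter
    have hytendsATop : Tendsto y atTop (𝓝 x) := by
      rw [tendsto_iff_dist_tendsto_zero]
      apply squeeze_zero (fun k => dist_nonneg) (fun k => (hy2 k).le)
      exact tendsto_one_div_add_atTop_nhds_zero_nat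
    have hytends : Tendsto y (𝒱 : Filter ℕ) (𝓝 x) := hytendsATop.mono_left h𝒱le
    -- ext α' z tends to ext α' zstar along the ultrafilter
    have hztends : Tendsto z (𝒱 : Filter ℕ) (𝓝[deltaBar] zstar) := by
      have h1 : (G : Filter OP) ≤ 𝓝[deltaBar] zstar := le_inf hGle hGprin
      rw [hGdef, Ultrafilter.coe_map] at h1
      exact h1
    have hexttends : Tendsto (fun k => ext α' (z k)) (𝒱 : Filter ℕ) (𝓝 (ext α' zstar)) :=
      Filter.Tendsto.comp (hcontext.continuousWithinAt hzstar) hztends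
    have hexteq : ∀ k, ext α' (z k) = y k := hz2
    have hlim : ext α' zstar = x := by
      apply tendsto_nhds_unique _ hytends
      convert hexttends using 1
      funext k
      exact (hexteq k).symm
    -- zstar cannot be in deltaInf
    have hznotinf : zstar ∉ deltaInf := by
      intro hzinf
      have : ext α' zstar ∈ (pathIm α')ᶜ := him ▸ mem_image_of_mem _ hzinf
      rw [hlim] at this
      exact this ⟨p0, hp0, hp0x⟩
    have hzcirc : zstar ∈ circOP := by
      by_contra hne
      exact hznotinf ⟨hzstar, hne⟩
    obtain ⟨q, hq, hqz0⟩ := hzcirc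
    have hqz : ((q : ℝ × ℝ) : OP) = zstar := hqz0
    -- the limit point is u or v
    have hαq : α' q = x := by
      rw [← hlim, ← hqz]
      exact (hrestr q hq).symm
    have hq_or : q = p0 ∨ q = (p0.1, -p0.2) := by
      have := (hdata.alpha α' hα').2 q hq p0 hp0
      rw [hαq, ← hp0x] at this
      obtain ⟨h1, h2⟩ := this.mp rfl
      rcases h2 with h2 | h2
      · left; exact Prod.ext h1 h2
      · right; exact Prod.ext h1 h2
    -- apply the regluing tendsto condition
    have htendsto := hreg.tendsto α' hα' q hq
    have hGle2 : (G : Filter OP) ≤ 𝓝[deltaInf ∩ ext α' ⁻¹' (famIm A)ᶜ] zstar := by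
      apply le_inf hGle
      rw [le_principal_iff, hGdef, Ultrafilter.coe_map]
      exact Filter.mem_map.mpr (Filter.univ_mem'
        (fun k => ⟨hz1 k, by rw [mem_preimage, hexteq k]; exact hy1 k⟩))
    have hzS : Tendsto z (𝒱 : Filter ℕ)
        (𝓝[deltaInf ∩ ext α' ⁻¹' (famIm A)ᶜ] ((q : ℝ × ℝ) : OP)) := by
      rw [hqz]
      have h1 := hGle2
      rw [hGdef, Ultrafilter.coe_map] at h1
      exact h1
    have hΦtends : Tendsto (fun k => Φ (ext α' (z k))) (𝒱 : Filter ℕ) (𝓝 (b α' q)) := by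
      have h2 : Tendsto ((fun w => Φ (ext α' w)) ∘ z) (𝒱 : Filter ℕ) (𝓝 (b α' q)) :=
        htendsto.comp hzS
      exact h2
    -- but the values stay away from u and v
    have hclosed : IsClosed ((Metric.ball u c ∪ Metric.ball v c)ᶜ) :=
      (Metric.isOpen_ball.union Metric.isOpen_ball).isClosed_compl
    have hmem : b α' q ∈ (Metric.ball u c ∪ Metric.ball v c)ᶜ := by
      apply hclosed.mem_of_tendsto hΦtends
      apply Filter.mem_of_superset (univ_mem)
      intro k _
      have : Φ (ext α' (z k)) ∈ (Metric.ball u c ∪ Metric.ball v c)ᶜ := by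
        rw [hexteq k]; exact hy3 k
      exact this
    apply hmem
    rcases hq_or with rfl | rfl
    · exact Or.inl (Metric.mem_ball_self hcpos)
    · exact Or.inr (Metric.mem_ball_self hcpos)
  · -- x is a continuity point of Φ
    refine ⟨Φ x, Φ x, ?_⟩
    intro c hcpos
    have hcont : ContinuousWithinAt Φ (famIm A)ᶜ x := hreg.contOn.continuousWithinAt hx
    rw [ContinuousWithinAt, Metric.tendsto_nhdsWithin_nhds] at hcont
    obtain ⟨r, hrpos, hr⟩ := hcont c hcpos
    refine ⟨r, hrpos, fun y hy hdist => ?_⟩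
    exact Or.inl (Metric.mem_ball.mpr (hr hy hdist))

end AuxLemmas

/-- If `𝒜` is a countable contracted set of disjoint α-paths and `Φ` is a
regluing of `𝒜` into some set `ℬ` of disjoint β-paths, then `ℬ` is automatically contracted. -/
theorem regluing_target_contracted (A B : Set (ℝ × ℝ → Sph))
    (ext : (ℝ × ℝ → Sph) → OP → Sph) (b : (ℝ × ℝ → Sph) → ℝ × ℝ → Sph) (Φ : Sph → Sph)
    (hA : A.Countable) (hcontr : Contracted (pathIm '' A))
    (hdata : RegluingData A ext B b) (hreg : IsRegluing A ext B b Φ) :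
    Contracted (pathIm '' B) := by
  intro ε hε
  by_contra hfin
  have hinf : {s ∈ pathIm '' B | ε < Metric.diam s}.Infinite := hfin
  set emb := hinf.natEmbedding with hembdef
  have hprop : ∀ n : ℕ, (emb n : Set Sph) ∈ pathIm '' B ∧ ε < Metric.diam (emb n : Set Sph) :=
    fun n => (emb n).2
  have hexists : ∀ n : ℕ, ∃ α ∈ A, pathIm (b α) = (emb n : Set Sph) := by
    intro n
    obtain ⟨β, hβB, hβim⟩ := (hprop n).1
    obtain ⟨α, hαA, rfl⟩ := hdata.bij.surjOn hβB
    exact ⟨α, hαA, hβim⟩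
  choose αs hαA hαim using hexists
  have hβdiam : ∀ n, ε < Metric.diam (pathIm (b (αs n))) := by
    intro n; rw [hαim n]; exact (hprop n).2
  -- injectivity of n ↦ pathIm (αs n)
  have hαinj : Function.Injective αs := by
    intro n m hnm
    have : (emb n : Set Sph) = (emb m : Set Sph) := by rw [← hαim n, ← hαim m, hnm]
    exact emb.injective (Subtype.coe_injective this)
  have hpathinj : Function.Injective (fun n => pathIm (αs n)) := by
    intro n m hnm
    by_contra hne
    have hαne : αs n ≠ αs m := fun hc => hne (hαinj hc)
    have hdis : Disjoint (pathIm (αs n)) (pathIm (αs m)) := hdata.disjA (hαA n) (hαA m) hαne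
    have hnm' : pathIm (αs n) = pathIm (αs m) := hnm
    rw [hnm', disjoint_self] at hdis
    exact (pathIm_nonempty (αs m)).ne_empty hdis
  -- base points and a convergent subsequence
  set a : ℕ → Sph := fun n => αs n (1, 0) with hadef
  have ha : ∀ n, a n ∈ pathIm (αs n) := fun n => mem_image_of_mem _ one_zero_mem_circS
  obtain ⟨x, -, φ, hφmono, hφtend⟩ := isCompact_univ.tendsto_subseq (fun n => mem_univ (a n))
  -- the local pair around x
  obtain ⟨u, v, hpair⟩ := local_pair hdata hreg x
  obtain ⟨r, hrpos, hr⟩ := hpair (ε/8) (by positivity)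
  -- eventually the subsequence is close to x and the α-images are small
  have hev1 : ∀ᶠ n in atTop, dist (a (φ n)) x < r/4 := by
    have := Metric.tendsto_nhds.mp hφtend (r/4) (by positivity)
    exact this
  have hNfin : {n : ℕ | r/8 < Metric.diam (pathIm (αs n))}.Finite := by
    have hT := hcontr (r/8) (by positivity)
    apply Set.Finite.subset (Set.Finite.preimage (hpathinj.injOn) hT)
    intro n hn
    exact ⟨mem_image_of_mem pathIm (hαA n), hn⟩
  have hev2 : ∀ᶠ n in atTop, Metric.diam (pathIm (αs n)) ≤ r/8 := by
    have := hNfin.eventually_cofinite_notMem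
    rw [Nat.cofinite_eq_atTop] at this
    filter_upwards [this] with n hn
    exact le_of_not_gt hn
  have hev2' : ∀ᶠ n in atTop, Metric.diam (pathIm (αs (φ n))) ≤ r/8 :=
    (hφmono.tendsto_atTop).eventually hev2
  obtain ⟨n0, hd_ax, hdiamc⟩ := (hev1.and hev2').exists
  set αc : ℝ × ℝ → Sph := αs (φ n0) with hαcdef
  have hαcA : αc ∈ A := hαA (φ n0)
  have hαccont : ContinuousOn αc circS := (hdata.alpha αc hαcA).1
  have hbounded : Bornology.IsBounded (pathIm αc) := (pathIm_isCompact hαccont).isBounded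
  -- every point of the β-image lies near u or v
  have hsub : pathIm (b αc) ⊆ Metric.closedBall u (ε/8) ∪ Metric.closedBall v (ε/8) := by
    rintro - ⟨p, hp, rfl⟩
    haveI hNB := nhdsWithin_regluing_neBot hA hdata.alpha hdata.extOk hαcA hp
    have htd := hreg.tendsto αc hαcA p hp
    obtain ⟨hcontext, hrestr, -, -⟩ := hdata.extOk αc hαcA
    have hLle : 𝓝[deltaInf ∩ ext αc ⁻¹' (famIm A)ᶜ] ((p : ℝ × ℝ) : OP) ≤
        𝓝[deltaBar] ((p : ℝ × ℝ) : OP) :=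
      nhdsWithin_mono _ (fun z hz => deltaInf_subset_deltaBar hz.1)
    have hextnd : Tendsto (ext αc) (𝓝[deltaInf ∩ ext αc ⁻¹' (famIm A)ᶜ] ((p : ℝ × ℝ) : OP))
        (𝓝 (αc p)) := by
      have h1 := hcontext.continuousWithinAt (coe_mem_deltaBar_of_circS hp)
      rw [ContinuousWithinAt, hrestr p hp] at h1
      exact h1.mono_left hLle
    have hd1 : ∀ᶠ w in 𝓝[deltaInf ∩ ext αc ⁻¹' (famIm A)ᶜ] ((p : ℝ × ℝ) : OP),
        dist (ext αc w) (αc p) < r/4 := Metric.tendsto_nhds.mp hextnd (r/4) (by positivity)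
    have hmemS : deltaInf ∩ ext αc ⁻¹' (famIm A)ᶜ ∈
        𝓝[deltaInf ∩ ext αc ⁻¹' (famIm A)ᶜ] ((p : ℝ × ℝ) : OP) := self_mem_nhdsWithin
    have heven : ∀ᶠ w in 𝓝[deltaInf ∩ ext αc ⁻¹' (famIm A)ᶜ] ((p : ℝ × ℝ) : OP),
        Φ (ext αc w) ∈ Metric.ball u (ε/8) ∪ Metric.ball v (ε/8) := by
      filter_upwards [hd1, hmemS] with w hw1 hw2
      have hymem : ext αc w ∈ (famIm A)ᶜ := hw2.2
      have hyd : dist (ext αc w) x < r := by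
        have t1 : dist (ext αc w) x ≤ dist (ext αc w) (αc p) + dist (αc p) (a (φ n0)) +
            dist (a (φ n0)) x := dist_triangle4 _ _ _ _
        have t2 : dist (αc p) (a (φ n0)) ≤ Metric.diam (pathIm αc) :=
          Metric.dist_le_diam_of_mem hbounded (mem_image_of_mem _ hp) (ha (φ n0))
        have t3 : Metric.diam (pathIm αc) ≤ r/8 := hdiamc
        linarith
      exact hr _ hymem hyd
    have hclosed : IsClosed (Metric.closedBall u (ε/8) ∪ Metric.closedBall v (ε/8)) :=
      Metric.isClosed_closedBall.union Metric.isClosed_closedBall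
    apply hclosed.mem_of_tendsto htd
    filter_upwards [heven] with w hw
    rcases hw with hw | hw
    · exact Or.inl (Metric.ball_subset_closedBall hw)
    · exact Or.inr (Metric.ball_subset_closedBall hw)
  -- conclude via connectedness
  have hβccont : ContinuousOn (b αc) circS := (hdata.beta _ (hdata.bij.mapsTo hαcA)).1
  have hpre : IsPreconnected (pathIm (b αc)) := pathIm_isPreconnected hβccont
  have hbig : ε < Metric.diam (pathIm (b αc)) := hβdiam (φ n0)
  by_cases huv : dist u v ≤ ε/2
  · have hle : Metric.diam (pathIm (b αc)) ≤ 3*ε/4 := by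
      apply Metric.diam_le_of_forall_dist_le (by linarith)
      intro y1 hy1 y2 hy2
      rcases hsub hy1 with h1 | h1 <;> rcases hsub hy2 with h2 | h2 <;>
        rw [Metric.mem_closedBall] at h1 h2
      · have := dist_triangle y1 u y2
        have := dist_comm y2 u
        linarith [dist_triangle y1 u y2, (dist_comm y2 u ▸ h2 : dist u y2 ≤ ε/8)]
      · linarith [dist_triangle4 y1 u v y2, (dist_comm y2 v ▸ h2 : dist v y2 ≤ ε/8)]
      · linarith [dist_triangle4 y1 v u y2, (dist_comm y2 u ▸ h2 : dist u y2 ≤ ε/8),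
          (dist_comm v u ▸ huv : dist v u ≤ ε/2)]
      · linarith [dist_triangle y1 v y2, (dist_comm y2 v ▸ h2 : dist v y2 ≤ ε/8)]
    linarith
  · push_neg at huv
    have hdisj : Disjoint (Metric.ball u (ε/4)) (Metric.ball v (ε/4)) := by
      apply Metric.ball_disjoint_ball
      linarith
    have hsub2 : pathIm (b αc) ⊆ Metric.ball u (ε/4) ∪ Metric.ball v (ε/4) := by
      intro y hy
      rcases hsub hy with h | h
      · exact Or.inl (Metric.closedBall_subset_ball (by linarith) h)
      · exact Or.inr (Metric.closedBall_subset_ball (by linarith) h)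
    have hballdiam : ∀ w : Sph, Metric.diam (Metric.ball w (ε/4)) ≤ ε/2 := by
      intro w
      have := Metric.diam_ball (x := w) (show (0:ℝ) ≤ ε/4 by linarith)
      linarith
    rcases hpre.subset_or_subset Metric.isOpen_ball Metric.isOpen_ball hdisj hsub2 with hsb | hsb
    · have := Metric.diam_mono hsb Metric.isBounded_ball
      linarith [hballdiam u]
    · have := Metric.diam_mono hsb Metric.isBounded_ball
      linarith [hballdiam v]
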